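/- arXiv:1404.1549 — 2 statements merged into one kernel-verified Lean document; each statement's English description precedes it below -/
import Mathlib

section
/- Let G and H be graphs without isolated vertices. Then G and H are isomorphic as graphs if and only if B(G) and B(H) are isomorphic as ℤ/2-posets. -/
/-- A graph: a vertex type with a symmetric edge relation (loops allowed). -/
structure LoopGraph where
  V : Type
  E : V → V → Prop
  symm : ∀ ⦃x y⦄, E x y → E y x

/-- LoopGraph homomorphisms. -/
def LoopGraph.Hom (G H : LoopGraph) : Type :=
  {f : G.V → H.V // ∀ ⦃x y⦄, G.E x y → H.E (f x) (f y)}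

/-- LoopGraph isomorphisms: bijective homomorphisms whose inverse is a homomorphism. -/
structure LoopGraph.Iso (G H : LoopGraph) extends G.V ≃ H.V where
  edge_iff : ∀ x y, G.E x y ↔ H.E (toEquiv x) (toEquiv y)

/-- The complete graph `K₂` on two vertices. -/
def K2 : LoopGraph := ⟨Fin 2, fun x y => x ≠ y, fun _ _ h => h.symm⟩

/-- The tensor (categorical) product of graphs. -/
def LoopGraph.tensor (G H : LoopGraph) : LoopGraph :=
  ⟨G.V × H.V, fun p q => G.E p.1 q.1 ∧ H.E p.2 q.2,
   fun _ _ h => ⟨G.symm h.1, H.symm h.2⟩⟩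

/-- No isolated vertices. -/
def LoopGraph.NoIsolated (G : LoopGraph) : Prop := ∀ x, ∃ y, G.E x y

/-- The box complex `B(G)`: pairs of nonempty subsets `(σ, τ)` with `σ × τ ⊆ E(G)`. -/
def LoopGraph.Box (G : LoopGraph) : Type :=
  {p : Set G.V × Set G.V //
    p.1.Nonempty ∧ p.2.Nonempty ∧ ∀ x ∈ p.1, ∀ y ∈ p.2, G.E x y}

instance (G : LoopGraph) : PartialOrder G.Box where
  le a b := a.1.1 ⊆ b.1.1 ∧ a.1.2 ⊆ b.1.2
  le_refl a := ⟨subset_rfl, subset_rfl⟩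
  le_trans a b c h1 h2 := ⟨h1.1.trans h2.1, h1.2.trans h2.2⟩
  le_antisymm a b h1 h2 :=
    Subtype.ext (Prod.ext (h1.1.antisymm h2.1) (h1.2.antisymm h2.2))

/-- The canonical involution `(σ,τ) ↦ (τ,σ)` of the box complex. -/
def LoopGraph.Box.flip {G : LoopGraph} (p : G.Box) : G.Box :=
  ⟨(p.1.2, p.1.1), p.2.2.1, p.2.1, fun x hx y hy => G.symm (p.2.2.2 y hy x hx)⟩

namespace BoxAux

variable {G H : LoopGraph}

/-- The atom `({x},{y})` of the box complex. -/
def atomB (G : LoopGraph) {x y : G.V} (h : G.E x y) : G.Box :=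
  ⟨({x}, {y}), Set.singleton_nonempty x, Set.singleton_nonempty y, by
    rintro a ha b hb
    rw [Set.mem_singleton_iff] at ha hb; subst ha; subst hb; exact h⟩

lemma le_def {p q : G.Box} : p ≤ q ↔ p.1.1 ⊆ q.1.1 ∧ p.1.2 ⊆ q.1.2 := Iff.rfl

lemma atomB_inj {x y x' y' : G.V} {h : G.E x y} {h' : G.E x' y'}
    (e : atomB G h = atomB G h') : x = x' ∧ y = y' := by
  have h1 : ({x} : Set G.V) = {x'} := congrArg (fun p => p.1.1) e
  have h2 : ({y} : Set G.V) = {y'} := congrArg (fun p => p.1.2) e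
  exact ⟨Set.singleton_eq_singleton_iff.1 h1, Set.singleton_eq_singleton_iff.1 h2⟩

lemma atomB_le_iff {x y : G.V} {h : G.E x y} {p : G.Box} :
    atomB G h ≤ p ↔ x ∈ p.1.1 ∧ y ∈ p.1.2 := by
  show {x} ⊆ p.1.1 ∧ {y} ⊆ p.1.2 ↔ _
  simp [Set.singleton_subset_iff]

lemma atomB_flip {x y : G.V} (h : G.E x y) :
    (atomB G h).flip = atomB G (G.symm h) := rfl

/-- Minimal elements. -/
def Mini (p : G.Box) : Prop := ∀ q : G.Box, q ≤ p → q = p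

lemma mini_atomB {x y : G.V} (h : G.E x y) : Mini (atomB G h) := by
  intro q hq
  obtain ⟨⟨σ, τ⟩, hσ, hτ, _⟩ := q
  have h1 : σ = {x} := hσ.subset_singleton_iff.1 hq.1
  have h2 : τ = {y} := hτ.subset_singleton_iff.1 hq.2
  exact Subtype.ext (Prod.ext h1 h2)

lemma mini_iff {p : G.Box} : Mini p ↔ ∃ x, ∃ y, ∃ h : G.E x y, p = atomB G h := by
  constructor
  · intro hp
    obtain ⟨⟨σ, τ⟩, hσ, hτ, hE⟩ := p
    obtain ⟨x, hx⟩ := hσ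
    obtain ⟨y, hy⟩ := hτ
    have hxy : G.E x y := hE x hx y hy
    refine ⟨x, y, hxy, (hp (atomB G hxy) ?_).symm⟩
    exact atomB_le_iff.2 ⟨hx, hy⟩
  · rintro ⟨x, y, h, rfl⟩; exact mini_atomB h

/-- Two elements lie on a common "line". -/
def Lin (a b : G.Box) : Prop :=
  ∃ r : G.Box, a ≤ r ∧ b ≤ r ∧ ∀ c : G.Box, Mini c → c ≤ r → c = a ∨ c = b

lemma lin_atom_iff {x y x' y' : G.V} (h : G.E x y) (h' : G.E x' y') :
    Lin (atomB G h) (atomB G h') ↔ (x = x' ∨ y = y') := by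
  constructor
  · rintro ⟨r, hr1, hr2, hr3⟩
    rw [atomB_le_iff] at hr1 hr2
    have hxy' : G.E x y' := r.2.2.2 x hr1.1 y' hr2.2
    have := hr3 (atomB G hxy') (mini_atomB hxy') (atomB_le_iff.2 ⟨hr1.1, hr2.2⟩)
    rcases this with hc | hc
    · exact Or.inr (atomB_inj hc).2.symm
    · exact Or.inl (atomB_inj hc).1
  · rintro (rfl | rfl)
    · refine ⟨⟨({x}, {y, y'}), Set.singleton_nonempty x, ⟨y, by simp⟩, ?_⟩, ?_, ?_, ?_⟩
      · rintro a ha b hb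
        rw [Set.mem_singleton_iff] at ha; subst ha
        rcases hb with rfl | hb
        · exact h
        · rw [Set.mem_singleton_iff] at hb; subst hb; exact h'
      · exact atomB_le_iff.2 ⟨rfl, by simp⟩
      · exact atomB_le_iff.2 ⟨rfl, by simp⟩
      · intro c hc hcr
        obtain ⟨p, q, hpq, rfl⟩ := mini_iff.1 hc
        replace hcr := atomB_le_iff.1 hcr
        obtain ⟨hp, hq⟩ := hcr
        rw [Set.mem_singleton_iff] at hp; subst hp
        rcases hq with rfl | hq
        · exact Or.inl (by apply Subtype.ext; rfl)
        · rw [Set.mem_singleton_iff] at hq; subst hq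
          exact Or.inr (by apply Subtype.ext; rfl)
    · refine ⟨⟨({x, x'}, {y}), ⟨x, by simp⟩, Set.singleton_nonempty y, ?_⟩, ?_, ?_, ?_⟩
      · rintro a ha b hb
        rw [Set.mem_singleton_iff] at hb; subst hb
        rcases ha with rfl | ha
        · exact h
        · rw [Set.mem_singleton_iff] at ha; subst ha; exact h'
      · exact atomB_le_iff.2 ⟨by simp, rfl⟩
      · exact atomB_le_iff.2 ⟨by simp, rfl⟩
      · intro c hc hcr
        obtain ⟨p, q, hpq, rfl⟩ := mini_iff.1 hc
        replace hcr := atomB_le_iff.1 hcr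
        obtain ⟨hp, hq⟩ := hcr
        rw [Set.mem_singleton_iff] at hq; subst hq
        rcases hp with rfl | hp
        · exact Or.inl (by apply Subtype.ext; rfl)
        · rw [Set.mem_singleton_iff] at hp; subst hp
          exact Or.inr (by apply Subtype.ext; rfl)

lemma lin_self {x y : G.V} (h : G.E x y) : Lin (atomB G h) (atomB G h) :=
  (lin_atom_iff h h).2 (Or.inl rfl)

section Transfer
variable (f : G.Box ≃o H.Box)

lemma mini_map {p : G.Box} (hp : Mini p) : Mini (f p) := by
  intro q hq
  have : f.symm q ≤ p := by
    have := f.symm.monotone hq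
    simpa using this
  have := hp _ this
  have : f (f.symm q) = f p := congrArg f this
  simpa using this

lemma lin_map {a b : G.Box} (hab : Lin a b) : Lin (f a) (f b) := by
  obtain ⟨r, h1, h2, h3⟩ := hab
  refine ⟨f r, f.monotone h1, f.monotone h2, ?_⟩
  intro c hc hcr
  have hc' : Mini (f.symm c) := mini_map f.symm hc
  have hcr' : f.symm c ≤ r := by have := f.symm.monotone hcr; simpa using this
  rcases h3 _ hc' hcr' with h | h
  · left; have := congrArg f h; simpa using this
  · right; have := congrArg f h; simpa using this

/-- image of an atom is an atom -/
lemma exists_img {x y : G.V} (h : G.E x y) :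
    ∃ u, ∃ v, ∃ e : H.E u v, f (atomB G h) = atomB H e := by
  have := mini_map f (mini_atomB h)
  exact mini_iff.1 this

end Transfer

lemma lin_reflect (f : G.Box ≃o H.Box) {a b : G.Box} (hab : Lin (f a) (f b)) : Lin a b := by
  have := lin_map f.symm hab
  simpa using this

end BoxAux

namespace BoxAux

variable {G H : LoopGraph}

def Deg2 (G : LoopGraph) (x : G.V) : Prop := ∃ y, ∃ z, G.E x y ∧ G.E x z ∧ y ≠ z

lemma uniq_nbr {x y z : G.V} (hx : ¬ Deg2 G x) (h1 : G.E x y) (h2 : G.E x z) : y = z := by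
  by_contra hne
  exact hx ⟨y, z, h1, h2, hne⟩

section RC
variable (f : G.Box ≃o H.Box)

/-- `f` maps the row of `x` into the row of `u`. -/
def RowTo (x : G.V) (u : H.V) : Prop :=
  ∀ ⦃y : G.V⦄ (h : G.E x y), ∃ v, ∃ e : H.E u v, f (atomB G h) = atomB H e

/-- `f` maps the row of `x` into the column of `v`. -/
def ColTo (x : G.V) (v : H.V) : Prop :=
  ∀ ⦃y : G.V⦄ (h : G.E x y), ∃ u, ∃ e : H.E u v, f (atomB G h) = atomB H e

lemma rowTo_unique {x : G.V} {u u' : H.V} (h1 : RowTo f x u) (h2 : RowTo f x u')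
    {y : G.V} (hy : G.E x y) : u = u' := by
  obtain ⟨v, e, he⟩ := h1 hy
  obtain ⟨v', e', he'⟩ := h2 hy
  have heq : atomB H e = atomB H e' := by rw [← he, ← he']
  exact (atomB_inj heq).1

lemma colTo_unique {x : G.V} {v v' : H.V} (h1 : ColTo f x v) (h2 : ColTo f x v')
    {y : G.V} (hy : G.E x y) : v = v' := by
  obtain ⟨u, e, he⟩ := h1 hy
  obtain ⟨u', e', he'⟩ := h2 hy
  have heq : atomB H e = atomB H e' := by rw [← he, ← he']
  exact (atomB_inj heq).2

lemma not_row_and_col {x : G.V} {u v : H.V} (hx : Deg2 G x)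
    (h1 : RowTo f x u) (h2 : ColTo f x v) : False := by
  obtain ⟨y1, y2, e1, e2, hne⟩ := hx
  obtain ⟨v1, f1, hf1⟩ := h1 e1
  obtain ⟨u1, g1, hg1⟩ := h2 e1
  obtain ⟨v2, f2, hf2⟩ := h1 e2
  obtain ⟨u2, g2, hg2⟩ := h2 e2
  have hq1 : atomB H f1 = atomB H g1 := by rw [← hf1, ← hg1]
  have hq2 : atomB H f2 = atomB H g2 := by rw [← hf2, ← hg2]
  have hv1 : v1 = v := (atomB_inj hq1).2
  have hv2 : v2 = v := (atomB_inj hq2).2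
  subst hv1
  have hv2' : v2 = v1 := hv2
  subst hv2'
  have : atomB G e1 = atomB G e2 := f.injective (by rw [hf1, hf2])
  exact hne (atomB_inj this).2

lemma rowOrCol (hG : G.NoIsolated) (x : G.V) :
    (∃ u, RowTo f x u) ∨ (∃ v, ColTo f x v) := by
  obtain ⟨y0, hy0⟩ := hG x
  obtain ⟨u0, v0, e0, he0⟩ := exists_img f hy0
  by_cases hrow : ∀ ⦃y : G.V⦄ (h : G.E x y), ∃ v, ∃ e : H.E u0 v, f (atomB G h) = atomB H e
  · exact Or.inl ⟨u0, hrow⟩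
  · push_neg at hrow
    obtain ⟨y1, h1, hne1⟩ := hrow
    obtain ⟨u1, v1, e1, he1⟩ := exists_img f h1
    have hu01 : u0 ≠ u1 := by
      rintro rfl
      exact hne1 v1 e1 he1
    have hlin : Lin (atomB H e0) (atomB H e1) := by
      rw [← he0, ← he1]
      exact lin_map f ((lin_atom_iff hy0 h1).2 (Or.inl rfl))
    have hv01 : v0 = v1 := ((lin_atom_iff e0 e1).1 hlin).resolve_left hu01
    refine Or.inr ⟨v0, ?_⟩
    intro y h
    obtain ⟨u', v', e', he'⟩ := exists_img f h
    have l0 : Lin (atomB H e0) (atomB H e') := by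
      rw [← he0, ← he']
      exact lin_map f ((lin_atom_iff hy0 h).2 (Or.inl rfl))
    have l1 : Lin (atomB H e1) (atomB H e') := by
      rw [← he1, ← he']
      exact lin_map f ((lin_atom_iff h1 h).2 (Or.inl rfl))
    rcases (lin_atom_iff e0 e').1 l0 with h0 | h0
    · rcases (lin_atom_iff e1 e').1 l1 with hA | hA
      · exact absurd (h0.trans hA.symm) hu01
      · have hv : v0 = v' := hv01.trans hA
        subst hv
        exact ⟨u', e', he'⟩
    · have hv : v0 = v' := h0
      subst hv
      exact ⟨u', e', he'⟩

end RC

end BoxAux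

namespace BoxAux

variable {G H : LoopGraph}

section Flip
variable (f : G.Box ≃o H.Box) (hf : ∀ p : G.Box, f p.flip = (f p).flip)
include hf

lemma hf_symm : ∀ q : H.Box, f.symm q.flip = (f.symm q).flip := by
  intro q
  apply f.injective
  rw [hf, f.apply_symm_apply, f.apply_symm_apply]

lemma img_flip {x y : G.V} {u v : H.V} {h : G.E x y} {e : H.E u v}
    (he : f (atomB G h) = atomB H e) {h' : G.E y x} :
    f (atomB G h') = atomB H (H.symm e) := by
  have h1 : atomB G h' = (atomB G h).flip := rfl
  rw [h1, hf, he]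
  rfl

/-- Orientation coherence: adjacent vertices of degree ≥ 2 cannot have mixed
row/col orientations. -/
lemma ori {x y : G.V} {u c : H.V} (hx : Deg2 G x) (hy : Deg2 G y)
    (hxy : G.E x y) (hru : RowTo f x u) (hcc : ColTo f y c) : False := by
  obtain ⟨v, e, he⟩ := hru hxy
  have hyx : G.E y x := G.symm hxy
  have he2 : f (atomB G hyx) = atomB H (H.symm e) := img_flip f hf he
  -- pin c = u
  obtain ⟨u2, e2, he2'⟩ := hcc hyx
  have hcu : c = u := by
    have : atomB H (H.symm e) = atomB H e2 := by rw [← he2, ← he2']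
    exact ((atomB_inj this).2).symm
  subst hcu
  -- neighbor y' of x with y' ≠ y
  obtain ⟨y1, y2, ey1, ey2, hy12⟩ := hx
  obtain ⟨y', ey', hy'⟩ : ∃ y', ∃ _ : G.E x y', y' ≠ y := by
    by_cases h1 : y1 = y
    · exact ⟨y2, ey2, by rw [← h1]; exact hy12.symm⟩
    · exact ⟨y1, ey1, h1⟩
  -- neighbor x' of y with x' ≠ x
  obtain ⟨x1, x2, ex1, ex2, hx12⟩ := hy
  obtain ⟨x', ex', hx'⟩ : ∃ x', ∃ _ : G.E y x', x' ≠ x := by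
    by_cases h1 : x1 = x
    · exact ⟨x2, ex2, by rw [← h1]; exact hx12.symm⟩
    · exact ⟨x1, ex1, h1⟩
  obtain ⟨v', ev', hev'⟩ := hru ey'       -- f (atom x y') = atom u v'
  obtain ⟨w, ew, hew⟩ := hcc ex'          -- f (atom y x') = atom w u
  have exy' : G.E x' y := G.symm ex'
  have hexy : f (atomB G exy') = atomB H (H.symm ew) := img_flip f hf hew
  -- images are in the same row u, hence Lin
  have hlinH : Lin (f (atomB G ey')) (f (atomB G exy')) := by
    rw [hev', hexy]
    exact (lin_atom_iff ev' (H.symm ew)).2 (Or.inl rfl)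
  have hlinG : Lin (atomB G ey') (atomB G exy') := lin_reflect f hlinH
  rcases (lin_atom_iff ey' exy').1 hlinG with h1 | h1
  · exact hx' h1.symm
  · exact hy' h1

end Flip

end BoxAux

namespace BoxAux

variable {G H : LoopGraph}

lemma symm_img (f : G.Box ≃o H.Box) {x y : G.V} {u v : H.V} {h : G.E x y} {e : H.E u v}
    (he : f (atomB G h) = atomB H e) : f.symm (atomB H e) = atomB G h := by
  rw [← he]; simp

lemma img_lin_iff (f : G.Box ≃o H.Box) {x y x' y' : G.V} {u v u' v' : H.V}
    {h : G.E x y} {h' : G.E x' y'} {e : H.E u v} {e' : H.E u' v'}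
    (he : f (atomB G h) = atomB H e) (he' : f (atomB G h') = atomB H e') :
    (x = x' ∨ y = y') ↔ (u = u' ∨ v = v') := by
  constructor
  · intro hc
    have : Lin (f (atomB G h)) (f (atomB G h')) :=
      lin_map f ((lin_atom_iff h h').2 hc)
    rw [he, he'] at this
    exact (lin_atom_iff e e').1 this
  · intro hc
    have : Lin (f (atomB G h)) (f (atomB G h')) := by
      rw [he, he']
      exact (lin_atom_iff e e').2 hc
    exact (lin_atom_iff h h').1 (lin_reflect f this)

/-- The graph of the vertex map induced by a flip-equivariant order iso. -/
def Phi (f : G.Box ≃o H.Box) (x : G.V) (u : H.V) : Prop :=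
  (Deg2 G x ∧ (RowTo f x u ∨ ColTo f x u)) ∨
  (¬ Deg2 G x ∧ ∃ y, ∃ h : G.E x y, Deg2 G y ∧
    (((∃ w, RowTo f y w) ∧ ∃ v, ∃ e : H.E u v, f (atomB G h) = atomB H e) ∨
     ((∃ w, ColTo f y w) ∧ ∃ v, ∃ e : H.E v u, f (atomB G h) = atomB H e))) ∨
  (¬ Deg2 G x ∧ ∃ y, ∃ h : G.E x y, ¬ Deg2 G y ∧
    ∃ v, ∃ e : H.E u v, f (atomB G h) = atomB H e)

lemma phi_exists (f : G.Box ≃o H.Box) (hG : G.NoIsolated) (x : G.V) :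
    ∃ u, Phi f x u := by
  by_cases hx : Deg2 G x
  · rcases rowOrCol f hG x with ⟨u, hu⟩ | ⟨v, hv⟩
    · exact ⟨u, Or.inl ⟨hx, Or.inl hu⟩⟩
    · exact ⟨v, Or.inl ⟨hx, Or.inr hv⟩⟩
  · obtain ⟨y, hy⟩ := hG x
    by_cases hy2 : Deg2 G y
    · rcases rowOrCol f hG y with ⟨w, hw⟩ | ⟨w, hw⟩
      · obtain ⟨u, v, e, he⟩ := exists_img f hy
        exact ⟨u, Or.inr (Or.inl ⟨hx, y, hy, hy2, Or.inl ⟨⟨w, hw⟩, v, e, he⟩⟩)⟩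
      · obtain ⟨u, v, e, he⟩ := exists_img f hy
        exact ⟨v, Or.inr (Or.inl ⟨hx, y, hy, hy2, Or.inr ⟨⟨w, hw⟩, u, e, he⟩⟩)⟩
    · obtain ⟨u, v, e, he⟩ := exists_img f hy
      exact ⟨u, Or.inr (Or.inr ⟨hx, y, hy, hy2, v, e, he⟩)⟩

lemma phi_unique (f : G.Box ≃o H.Box) {x : G.V} {u u' : H.V}
    (h1 : Phi f x u) (h2 : Phi f x u') : u = u' := by
  rcases h1 with ⟨hx, hr1⟩ | ⟨hx, y, hy, hy2, hr1⟩ | ⟨hx, y, hy, hy2, hr1⟩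
  · rcases h2 with ⟨hx', hr2⟩ | ⟨hx', _⟩ | ⟨hx', _⟩
    · obtain ⟨y0, y1, e0, _, _⟩ := id hx
      rcases hr1 with hr1 | hr1 <;> rcases hr2 with hr2 | hr2
      · exact rowTo_unique f hr1 hr2 e0
      · exact (not_row_and_col f hx hr1 hr2).elim
      · exact (not_row_and_col f hx hr2 hr1).elim
      · exact colTo_unique f hr1 hr2 e0
    · exact (hx' hx).elim
    · exact (hx' hx).elim
  · rcases h2 with ⟨hx', _⟩ | ⟨hx', y', hy', hy2', hr2⟩ | ⟨hx', y', hy', hy2', hr2⟩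
    · exact (hx hx').elim
    · have hyy : y = y' := uniq_nbr hx hy hy'
      subst hyy
      have hatom : atomB G hy = atomB G hy' := rfl
      rcases hr1 with ⟨⟨w1, hw1⟩, v1, e1, he1⟩ | ⟨⟨w1, hw1⟩, v1, e1, he1⟩ <;>
        rcases hr2 with ⟨⟨w2, hw2⟩, v2, e2, he2⟩ | ⟨⟨w2, hw2⟩, v2, e2, he2⟩
      · have : atomB H e1 = atomB H e2 := by rw [← he1, ← he2, hatom]
        exact (atomB_inj this).1
      · exact (not_row_and_col f hy2 hw1 hw2).elim
      · exact (not_row_and_col f hy2 hw2 hw1).elim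
      · have : atomB H e1 = atomB H e2 := by rw [← he1, ← he2, hatom]
        exact (atomB_inj this).2
    · have hyy : y = y' := uniq_nbr hx hy hy'
      subst hyy
      exact (hy2' hy2).elim
  · rcases h2 with ⟨hx', _⟩ | ⟨hx', y', hy', hy2', hr2⟩ | ⟨hx', y', hy', hy2', hr2⟩
    · exact (hx hx').elim
    · have hyy : y = y' := uniq_nbr hx hy hy'
      subst hyy
      exact (hy2 hy2').elim
    · have hyy : y = y' := uniq_nbr hx hy hy'
      subst hyy
      obtain ⟨v1, e1, he1⟩ := hr1
      obtain ⟨v2, e2, he2⟩ := hr2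
      have hatom : atomB G hy = atomB G hy' := rfl
      have : atomB H e1 = atomB H e2 := by rw [← he1, ← he2, hatom]
      exact (atomB_inj this).1

end BoxAux

namespace BoxAux

variable {G H : LoopGraph}

section Sym
variable (f : G.Box ≃o H.Box) (hf : ∀ p : G.Box, f p.flip = (f p).flip)

lemma s1 {x : G.V} {u : H.V} (hx : Deg2 G x) (hr : RowTo f x u) :
    Deg2 H u ∧ RowTo f.symm u x := by
  obtain ⟨y1, y2, ey1, ey2, hne⟩ := hx
  obtain ⟨v1, e1, he1⟩ := hr ey1
  obtain ⟨v2, e2, he2⟩ := hr ey2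
  have hv : v1 ≠ v2 := by
    rintro rfl
    have : atomB G ey1 = atomB G ey2 := f.injective (by rw [he1, he2])
    exact hne (atomB_inj this).2
  refine ⟨⟨v1, v2, e1, e2, hv⟩, ?_⟩
  intro w ew
  obtain ⟨p, q, hpq, hb⟩ := mini_iff.1 (mini_map f.symm (mini_atomB ew))
  have l1 : (u = u ∨ w = v1) := Or.inl rfl
  have r1 := (img_lin_iff f.symm hb (symm_img f he1)).1
  have r2 := (img_lin_iff f.symm hb (symm_img f he2)).1
  have c1 : p = x ∨ q = y1 := r1 (Or.inl rfl)
  have c2 : p = x ∨ q = y2 := r2 (Or.inl rfl)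
  have hp : p = x := by
    rcases c1 with h | h
    · exact h
    · rcases c2 with h' | h'
      · exact h'
      · exact absurd (h.symm.trans h') hne
  subst hp
  exact ⟨q, hpq, hb⟩

include hf in
lemma s2 {x : G.V} {u : H.V} (hx : Deg2 G x) (hc : ColTo f x u) :
    Deg2 H u ∧ ColTo f.symm u x := by
  obtain ⟨y1, y2, ey1, ey2, hne⟩ := hx
  obtain ⟨w1, e1, he1⟩ := hc ey1
  obtain ⟨w2, e2, he2⟩ := hc ey2
  have hw : w1 ≠ w2 := by
    rintro rfl
    have : atomB G ey1 = atomB G ey2 := f.injective (by rw [he1, he2])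
    exact hne (atomB_inj this).2
  refine ⟨⟨w1, w2, H.symm e1, H.symm e2, hw⟩, ?_⟩
  intro w ew
  -- consider the flipped atom (w, u)
  have ewu : H.E w u := H.symm ew
  obtain ⟨p, q, hpq, hb⟩ := mini_iff.1 (mini_map f.symm (mini_atomB ewu))
  have c1 : p = x ∨ q = y1 := (img_lin_iff f.symm hb (symm_img f he1)).1 (Or.inr rfl)
  have c2 : p = x ∨ q = y2 := (img_lin_iff f.symm hb (symm_img f he2)).1 (Or.inr rfl)
  have hp : p = x := by
    rcases c1 with h | h
    · exact h
    · rcases c2 with h' | h'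
      · exact h'
      · exact absurd (h.symm.trans h') hne
  subst hp
  -- now flip back:  f.symm (atom u w) = (f.symm (atom w u)).flip = atom q x
  refine ⟨q, G.symm hpq, ?_⟩
  have : atomB H ew = (atomB H ewu).flip := rfl
  rw [this, hf_symm f hf, hb]
  rfl

end Sym

end BoxAux

namespace BoxAux

variable {G H : LoopGraph}

section S3
variable (f : G.Box ≃o H.Box) (hf : ∀ p : G.Box, f p.flip = (f p).flip)

lemma app_symm {A : H.Box} {B : G.Box} (h : f.symm A = B) : f B = A := by
  rw [← h]; simp

include hf in
lemma s3a {x y : G.V} {u v : H.V} (hx : ¬ Deg2 G x) {h : G.E x y} {e : H.E u v}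
    (he : f (atomB G h) = atomB H e) (hry : RowTo f y v) : ¬ Deg2 H u := by
  have key : ∀ w, ∀ ew : H.E u w, w = v := by
    intro w' ew'
    obtain ⟨p, q, hpq, hb⟩ := mini_iff.1 (mini_map f.symm (mini_atomB ew'))
    have hfb : f (atomB G hpq) = atomB H ew' := app_symm f hb
    rcases (img_lin_iff f.symm hb (symm_img f he)).1 (Or.inl rfl) with hc | hc
    · subst hc
      have hq : q = y := uniq_nbr hx hpq h
      subst hq
      have : atomB H ew' = atomB H e := by
        rw [← hfb, ← he]
      exact (atomB_inj this).2
    · subst hc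
      have hflip : f (atomB G (G.symm hpq)) = atomB H (H.symm ew') := img_flip f hf hfb
      obtain ⟨v', e', he'⟩ := hry (G.symm hpq)
      have : atomB H (H.symm ew') = atomB H e' := by rw [← hflip, ← he']
      exact (atomB_inj this).1
  intro hu
  obtain ⟨w1, w2, ew1, ew2, hne⟩ := hu
  exact hne ((key w1 ew1).trans (key w2 ew2).symm)

include hf in
lemma s3b {x y : G.V} {u w : H.V} (hx : ¬ Deg2 G x) {h : G.E x y} {e : H.E w u}
    (he : f (atomB G h) = atomB H e) (hcy : ColTo f y w) : ¬ Deg2 H u := by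
  have heyx : f (atomB G (G.symm h)) = atomB H (H.symm e) := img_flip f hf he
  have key : ∀ w', ∀ ew' : H.E u w', w' = w := by
    intro w' ew'
    obtain ⟨p, q, hpq, hb⟩ := mini_iff.1 (mini_map f.symm (mini_atomB ew'))
    have hfb : f (atomB G hpq) = atomB H ew' := app_symm f hb
    rcases (img_lin_iff f.symm hb (symm_img f heyx)).1 (Or.inl rfl) with hc | hc
    · subst hc
      obtain ⟨u', e', he'⟩ := hcy hpq
      have : atomB H ew' = atomB H e' := by rw [← hfb, ← he']
      exact (atomB_inj this).2
    · subst hc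
      have hp : p = y := uniq_nbr hx (G.symm hpq) h
      subst hp
      have : atomB H ew' = atomB H (H.symm e) := by rw [← hfb, ← heyx]
      exact (atomB_inj this).2
  intro hu
  obtain ⟨w1, w2, ew1, ew2, hne⟩ := hu
  exact hne ((key w1 ew1).trans (key w2 ew2).symm)

include hf in
lemma s3c {x y : G.V} {u v : H.V} (hx : ¬ Deg2 G x) (hy : ¬ Deg2 G y)
    {h : G.E x y} {e : H.E u v} (he : f (atomB G h) = atomB H e) :
    ¬ Deg2 H u ∧ ¬ Deg2 H v := by
  have heyx : f (atomB G (G.symm h)) = atomB H (H.symm e) := img_flip f hf he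
  constructor
  · have key : ∀ w, ∀ ew : H.E u w, w = v := by
      intro w' ew'
      obtain ⟨p, q, hpq, hb⟩ := mini_iff.1 (mini_map f.symm (mini_atomB ew'))
      have hfb : f (atomB G hpq) = atomB H ew' := app_symm f hb
      rcases (img_lin_iff f.symm hb (symm_img f he)).1 (Or.inl rfl) with hc | hc
      · subst hc
        have hq : q = y := uniq_nbr hx hpq h
        subst hq
        have : atomB H ew' = atomB H e := by rw [← hfb, ← he]
        exact (atomB_inj this).2
      · subst hc
        have hp : p = x := uniq_nbr hy (G.symm hpq) (G.symm h)
        subst hp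
        have : atomB H ew' = atomB H e := by rw [← hfb, ← he]
        exact (atomB_inj this).2
    intro hu
    obtain ⟨w1, w2, ew1, ew2, hne⟩ := hu
    exact hne ((key w1 ew1).trans (key w2 ew2).symm)
  · have key : ∀ w, ∀ ew : H.E v w, w = u := by
      intro w' ew'
      obtain ⟨p, q, hpq, hb⟩ := mini_iff.1 (mini_map f.symm (mini_atomB ew'))
      have hfb : f (atomB G hpq) = atomB H ew' := app_symm f hb
      rcases (img_lin_iff f.symm hb (symm_img f heyx)).1 (Or.inl rfl) with hc | hc
      · subst hc
        have hq : q = x := uniq_nbr hy hpq (G.symm h)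
        subst hq
        have : atomB H ew' = atomB H (H.symm e) := by rw [← hfb, ← heyx]
        exact (atomB_inj this).2
      · subst hc
        have hp : p = y := uniq_nbr hx (G.symm hpq) h
        subst hp
        have : atomB H ew' = atomB H (H.symm e) := by rw [← hfb, ← heyx]
        exact (atomB_inj this).2
    intro hu
    obtain ⟨w1, w2, ew1, ew2, hne⟩ := hu
    exact hne ((key w1 ew1).trans (key w2 ew2).symm)

end S3

end BoxAux

namespace BoxAux

variable {G H : LoopGraph}

variable (f : G.Box ≃o H.Box) (hf : ∀ p : G.Box, f p.flip = (f p).flip)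

include hf in
lemma sym {x : G.V} {u : H.V} (hp : Phi f x u) : Phi f.symm u x := by
  rcases hp with ⟨hx, hr | hc⟩ | ⟨hx, y, hy, hy2, hB⟩ | ⟨hx, y, hy, hy2, v, e, he⟩
  · obtain ⟨d2, hr'⟩ := s1 f hx hr
    exact Or.inl ⟨d2, Or.inl hr'⟩
  · obtain ⟨d2, hc'⟩ := s2 f hf hx hc
    exact Or.inl ⟨d2, Or.inr hc'⟩
  · rcases hB with ⟨⟨w, hw⟩, v, e, he⟩ | ⟨⟨c, hc⟩, w, e, he⟩
    · -- B-row : f (atom x y) = atom u v, RowTo f y w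
      have hflip : f (atomB G (G.symm hy)) = atomB H (H.symm e) := img_flip f hf he
      obtain ⟨v', e', he'⟩ := hw (G.symm hy)
      have hwv : w = v := by
        have : atomB H (H.symm e) = atomB H e' := by rw [← hflip, ← he']
        exact ((atomB_inj this).1).symm
      subst hwv
      obtain ⟨d2v, hrv'⟩ := s1 f hy2 hw
      have hnu : ¬ Deg2 H u := s3a f hf hx he hw
      exact Or.inr (Or.inl ⟨hnu, w, e, d2v, Or.inl ⟨⟨y, hrv'⟩, y, hy, symm_img f he⟩⟩)
    · -- B-col : f (atom x y) = atom w u  (e : H.E w u), ColTo f y c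
      have hflip : f (atomB G (G.symm hy)) = atomB H (H.symm e) := img_flip f hf he
      obtain ⟨u', e', he'⟩ := hc (G.symm hy)
      have hcw : c = w := by
        have : atomB H (H.symm e) = atomB H e' := by rw [← hflip, ← he']
        exact ((atomB_inj this).2).symm
      subst hcw
      obtain ⟨d2w, hcw'⟩ := s2 f hf hy2 hc
      have hnu : ¬ Deg2 H u := s3b f hf hx he hc
      refine Or.inr (Or.inl ⟨hnu, c, H.symm e, d2w, Or.inr ⟨⟨y, hcw'⟩, y, G.symm hy, ?_⟩⟩)
      have h1 : atomB H (H.symm e) = (atomB H e).flip := rfl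
      rw [h1, hf_symm f hf, symm_img f he]
      rfl
  · obtain ⟨hnu, hnv⟩ := s3c f hf hx hy2 he
    exact Or.inr (Or.inr ⟨hnu, v, e, hnv, y, hy, symm_img f he⟩)

end BoxAux

namespace BoxAux

variable {G H : LoopGraph}

variable (f : G.Box ≃o H.Box) (hf : ∀ p : G.Box, f p.flip = (f p).flip)

lemma phi_loc {x y : G.V} (h : G.E x y) {u v a : H.V} {e : H.E u v}
    (he : f (atomB G h) = atomB H e) (ha : Phi f x a) :
    (Deg2 G x ∧ ((RowTo f x u ∧ a = u) ∨ (ColTo f x v ∧ a = v))) ∨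
    (¬ Deg2 G x ∧ Deg2 G y ∧
      (((∃ w, RowTo f y w) ∧ a = u) ∨ ((∃ w, ColTo f y w) ∧ a = v))) ∨
    (¬ Deg2 G x ∧ ¬ Deg2 G y ∧ a = u) := by
  rcases ha with ⟨hx, hr | hc⟩ | ⟨hx, y', hy', hy2', br⟩ | ⟨hx, y', hy', hy2', v1, e1, he1⟩
  · obtain ⟨v1, e1, he1⟩ := hr h
    have hau : a = u := by
      have : atomB H e1 = atomB H e := by rw [← he1, ← he]
      exact (atomB_inj this).1
    subst hau
    exact Or.inl ⟨hx, Or.inl ⟨hr, rfl⟩⟩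
  · obtain ⟨u1, e1, he1⟩ := hc h
    have hav : a = v := by
      have : atomB H e1 = atomB H e := by rw [← he1, ← he]
      exact (atomB_inj this).2
    subst hav
    exact Or.inl ⟨hx, Or.inr ⟨hc, rfl⟩⟩
  · have hyy : y' = y := uniq_nbr hx hy' h
    subst hyy
    have hatom : atomB G hy' = atomB G h := rfl
    rcases br with ⟨hw, v1, e1, he1⟩ | ⟨hw, v1, e1, he1⟩
    · have hau : a = u := by
        have : atomB H e1 = atomB H e := by rw [← he1, ← he, hatom]
        exact (atomB_inj this).1
      exact Or.inr (Or.inl ⟨hx, hy2', Or.inl ⟨hw, hau⟩⟩)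
    · have hav : a = v := by
        have : atomB H e1 = atomB H e := by rw [← he1, ← he, hatom]
        exact (atomB_inj this).2
      exact Or.inr (Or.inl ⟨hx, hy2', Or.inr ⟨hw, hav⟩⟩)
  · have hyy : y' = y := uniq_nbr hx hy' h
    subst hyy
    have hatom : atomB G hy' = atomB G h := rfl
    have hau : a = u := by
      have : atomB H e1 = atomB H e := by rw [← he1, ← he, hatom]
      exact (atomB_inj this).1
    exact Or.inr (Or.inr ⟨hx, hy2', hau⟩)

include hf in
lemma hom {x y : G.V} (h : G.E x y) {a b : H.V}
    (ha : Phi f x a) (hb : Phi f y b) : H.E a b := by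
  obtain ⟨u, v, e, he⟩ := exists_img f h
  have heflip : f (atomB G (G.symm h)) = atomB H (H.symm e) := img_flip f hf he
  have la := phi_loc f h he ha
  have lb := phi_loc f (G.symm h) heflip hb
  rcases la with ⟨hx, sa⟩ | ⟨hx, hy2, sa⟩ | ⟨hx, hy2, rfl⟩
  · rcases lb with ⟨hy, sb⟩ | ⟨hy, hx2, sb⟩ | ⟨hy, hx2, rfl⟩
    · rcases sa with ⟨hra, rfl⟩ | ⟨hca, rfl⟩
      · rcases sb with ⟨hrb, rfl⟩ | ⟨hcb, rfl⟩
        · exact e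
        · exact (ori f hf hx hy h hra hcb).elim
      · rcases sb with ⟨hrb, rfl⟩ | ⟨hcb, rfl⟩
        · exact (ori f hf hy hx (G.symm h) hrb hca).elim
        · exact H.symm e
    · rcases sb with ⟨⟨w, hw⟩, rfl⟩ | ⟨⟨w, hw⟩, rfl⟩
      · rcases sa with ⟨hra, rfl⟩ | ⟨hca, rfl⟩
        · exact e
        · exact (not_row_and_col f hx hw hca).elim
      · rcases sa with ⟨hra, rfl⟩ | ⟨hca, rfl⟩
        · exact (not_row_and_col f hx hra hw).elim
        · exact H.symm e
    · exact (hx2 hx).elim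
  · rcases lb with ⟨hy, sb⟩ | ⟨hy, hx2, _⟩ | ⟨hy, hx2, rfl⟩
    · rcases sa with ⟨⟨w, hw⟩, rfl⟩ | ⟨⟨w, hw⟩, rfl⟩
      · rcases sb with ⟨hrb, rfl⟩ | ⟨hcb, rfl⟩
        · exact e
        · exact (not_row_and_col f hy2 hw hcb).elim
      · rcases sb with ⟨hrb, rfl⟩ | ⟨hcb, rfl⟩
        · exact (not_row_and_col f hy2 hrb hw).elim
        · exact H.symm e
    · exact (hx hx2).elim
    · exact (hy hy2).elim
  · rcases lb with ⟨hy, _⟩ | ⟨hy, hx2, _⟩ | ⟨hy, hx2, rfl⟩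
    · exact (hy2 hy).elim
    · exact (hx hx2).elim
    · exact e

end BoxAux

namespace BoxAux

variable {G H : LoopGraph}

noncomputable def phiFun (f : G.Box ≃o H.Box) (hG : G.NoIsolated) : G.V → H.V :=
  fun x => Classical.choose (phi_exists f hG x)

lemma phiFun_spec (f : G.Box ≃o H.Box) (hG : G.NoIsolated) (x : G.V) :
    Phi f x (phiFun f hG x) := Classical.choose_spec (phi_exists f hG x)

lemma phiFun_eq (f : G.Box ≃o H.Box) (hG : G.NoIsolated) {x : G.V} {u : H.V}
    (hu : Phi f x u) : phiFun f hG x = u :=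
  phi_unique f (phiFun_spec f hG x) hu

noncomputable def mkIso (f : G.Box ≃o H.Box) (hf : ∀ p : G.Box, f p.flip = (f p).flip)
    (hG : G.NoIsolated) (hH : H.NoIsolated) : G.Iso H := by
  refine ⟨⟨phiFun f hG, phiFun f.symm hH, ?_, ?_⟩, ?_⟩
  · intro x
    exact phiFun_eq f.symm hH (sym f hf (phiFun_spec f hG x))
  · intro u
    have h1 : Phi f.symm.symm (phiFun f.symm hH u) u :=
      sym f.symm (hf_symm f hf) (phiFun_spec f.symm hH u)
    rw [OrderIso.symm_symm] at h1
    exact phiFun_eq f hG h1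
  · intro x y
    constructor
    · intro h
      exact hom f hf h (phiFun_spec f hG x) (phiFun_spec f hG y)
    · intro h
      have := hom f.symm (hf_symm f hf) h
        (phiFun_spec f.symm hH (phiFun f hG x)) (phiFun_spec f.symm hH (phiFun f hG y))
      have hx : phiFun f.symm hH (phiFun f hG x) = x :=
        phiFun_eq f.symm hH (sym f hf (phiFun_spec f hG x))
      have hy : phiFun f.symm hH (phiFun f hG y) = y :=
        phiFun_eq f.symm hH (sym f hf (phiFun_spec f hG y))
      rwa [hx, hy] at this

/-! ### Forward direction -/

def isoSymm (e : G.Iso H) : H.Iso G :=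
  ⟨e.toEquiv.symm, fun u v => by
    rw [e.edge_iff (e.toEquiv.symm u) (e.toEquiv.symm v)]
    simp⟩

def boxMap (e : G.Iso H) (p : G.Box) : H.Box :=
  ⟨(e.toEquiv '' p.1.1, e.toEquiv '' p.1.2), p.2.1.image _, p.2.2.1.image _, by
    rintro a ⟨x, hx, rfl⟩ b ⟨y, hy, rfl⟩
    exact (e.edge_iff x y).1 (p.2.2.2 x hx y hy)⟩

def boxIso (e : G.Iso H) : G.Box ≃o H.Box where
  toFun := boxMap e
  invFun := boxMap (isoSymm e)
  left_inv p := by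
    apply Subtype.ext
    apply Prod.ext <;> simp [boxMap, isoSymm, Set.image_image]
  right_inv p := by
    apply Subtype.ext
    apply Prod.ext <;> simp [boxMap, isoSymm, Set.image_image]
  map_rel_iff' := by
    intro p q
    constructor
    · intro hpq
      have h1 : (boxMap e p).1.1 ⊆ (boxMap e q).1.1 := hpq.1
      have h2 : (boxMap e p).1.2 ⊆ (boxMap e q).1.2 := hpq.2
      simp only [boxMap] at h1 h2
      rw [Set.image_subset_image_iff e.toEquiv.injective] at h1 h2
      exact ⟨h1, h2⟩
    · intro hpq
      exact ⟨Set.image_mono hpq.1, Set.image_mono hpq.2⟩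

lemma boxIso_flip (e : G.Iso H) (p : G.Box) :
    boxIso e p.flip = (boxIso e p).flip := rfl

end BoxAux

/-- for graphs without isolated vertices, `G ≅ H` iff `B(G)` and `B(H)`
are isomorphic as ℤ/2-posets (order isomorphisms commuting with the involutions). -/
theorem graph_iso_iff_box_z2_poset_iso (G H : LoopGraph)
    (hG : G.NoIsolated) (hH : H.NoIsolated) :
    Nonempty (G.Iso H) ↔ ∃ f : G.Box ≃o H.Box, ∀ p : G.Box, f p.flip = (f p).flip := by
  constructor
  · rintro ⟨e⟩
    exact ⟨BoxAux.boxIso e, BoxAux.boxIso_flip e⟩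
  · rintro ⟨f, hf⟩
    exact ⟨BoxAux.mkIso f hf hG hH⟩
end

section
/- Let G and H be locally finite stiff graphs without isolated vertices. If the neighborhood complexes N(G) and N(H) are isomorphic as abstract simplicial complexes, then K_2 × G and K_2 × H are isomorphic as 2-colored graphs (each 2-colored by the first projection). -/
/-- An abstract simplicial complex, given by its vertex type and its simplices
(nonempty finite vertex sets). -/
structure SComplex where
  V : Type
  S : Finset V → Prop

/-- Isomorphism of abstract simplicial complexes: a bijection of vertex sets under
which a finite set is a simplex iff its image is a simplex. -/
def SComplex.Iso (A B : SComplex) : Prop :=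
  ∃ e : A.V ≃ B.V, ∀ s : Finset A.V, A.S s ↔ B.S (s.map e.toEmbedding)

/-- The neighborhood complex `N(G)`: vertices are the non-isolated vertices of `G`,
simplices the nonempty finite sets contained in the neighborhood of some vertex. -/
def LoopGraph.NC (G : LoopGraph) : SComplex where
  V := {x : G.V // ∃ y, G.E x y}
  S s := s.Nonempty ∧ ∃ v : G.V, ∀ x ∈ s, G.E v x.val

/-- A graph is stiff if `N(v) ⊆ N(w)` implies `v = w`. -/
def LoopGraph.Stiff (G : LoopGraph) : Prop :=
  ∀ v w : G.V, {y | G.E v y} ⊆ {y | G.E w y} → v = w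

lemma symm_iso (G H : LoopGraph) (e : G.NC.V ≃ H.NC.V)
    (he : ∀ s : Finset G.NC.V, G.NC.S s ↔ H.NC.S (s.map e.toEmbedding)) :
    ∀ s : Finset H.NC.V, H.NC.S s ↔ G.NC.S (s.map e.symm.toEmbedding) := by
  intro s
  rw [he]
  have : (s.map e.symm.toEmbedding).map e.toEmbedding = s := by
    rw [Finset.map_map]
    have : e.symm.toEmbedding.trans e.toEmbedding = Function.Embedding.refl _ := by
      ext a; simp
    rw [this, Finset.map_refl]
  rw [this]

lemma push_exists (G H : LoopGraph)
    (hGlf : ∀ x : G.V, {y | G.E x y}.Finite) (hHlf : ∀ x : H.V, {y | H.E x y}.Finite)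
    (hGst : G.Stiff) (hG : G.NoIsolated)
    (e : G.NC.V ≃ H.NC.V)
    (he : ∀ s : Finset G.NC.V, G.NC.S s ↔ H.NC.S (s.map e.toEmbedding))
    (v : G.V) :
    ∃ w : H.V, ∀ x : H.NC.V, H.E w x.val ↔ ∃ a : G.NC.V, G.E v a.val ∧ e a = x := by
  classical
  have he' := symm_iso G H e he
  have hfin : {x : G.NC.V | G.E v x.val}.Finite :=
    (hGlf v).preimage Subtype.val_injective.injOn
  have memNG : ∀ x : G.NC.V, x ∈ hfin.toFinset ↔ G.E v x.val := fun x => hfin.mem_toFinset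
  set NGv := hfin.toFinset with hNGdef
  have hSG : G.NC.S NGv := by
    refine ⟨?_, v, fun x hx => (memNG x).1 hx⟩
    obtain ⟨y, hy⟩ := hG v
    exact ⟨⟨y, ⟨v, G.symm hy⟩⟩, (memNG _).2 hy⟩
  obtain ⟨hne, w, hw⟩ := (he NGv).1 hSG
  have hfinH : {x : H.NC.V | H.E w x.val}.Finite :=
    (hHlf w).preimage Subtype.val_injective.injOn
  have memNH : ∀ x : H.NC.V, x ∈ hfinH.toFinset ↔ H.E w x.val := fun x => hfinH.mem_toFinset
  set NHw := hfinH.toFinset with hNHdef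
  have hSH : H.NC.S NHw := by
    refine ⟨?_, w, fun x hx => (memNH x).1 hx⟩
    obtain ⟨x, hx⟩ := hne
    exact ⟨x, (memNH x).2 (hw x hx)⟩
  obtain ⟨-, v', hv'⟩ := (he' NHw).1 hSH
  have hsub : {y | G.E v y} ⊆ {y | G.E v' y} := by
    intro y hy
    have ha : (⟨y, ⟨v, G.symm hy⟩⟩ : G.NC.V) ∈ NGv := (memNG _).2 hy
    have h1 : e ⟨y, ⟨v, G.symm hy⟩⟩ ∈ NHw :=
      (memNH _).2 (hw _ (Finset.mem_map_of_mem _ ha))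
    have h2 := hv' (e.symm (e ⟨y, ⟨v, G.symm hy⟩⟩)) (Finset.mem_map_of_mem _ h1)
    have h3 : (e.symm (e ⟨y, ⟨v, G.symm hy⟩⟩)).val = y := congrArg Subtype.val (e.symm_apply_apply _)
    show G.E v' y
    convert h2
    exact h3.symm
  have hvv' := hGst v v' hsub
  refine ⟨w, fun x => ⟨?_, ?_⟩⟩
  · intro hx
    have hmem : x ∈ NHw := (memNH x).2 hx
    have h3 := hv' (e.symm x) (Finset.mem_map_of_mem _ hmem)
    rw [← hvv'] at h3
    exact ⟨e.symm x, h3, e.apply_symm_apply x⟩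
  · rintro ⟨a, ha, rfl⟩
    exact hw (e a) (Finset.mem_map_of_mem _ ((memNG a).2 ha))

/-- if `G`, `H` are locally finite stiff graphs without isolated vertices
and `N(G) ≅ N(H)`, then `K₂ × G` and `K₂ × H` are isomorphic as 2-colored graphs
(each 2-colored by the first projection). -/
theorem kronecker_two_colored_iso_of_NC_iso (G H : LoopGraph)
    (hGlf : ∀ x : G.V, {y | G.E x y}.Finite) (hHlf : ∀ x : H.V, {y | H.E x y}.Finite)
    (hGst : G.Stiff) (hHst : H.Stiff)
    (hG : G.NoIsolated) (hH : H.NoIsolated)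
    (h : G.NC.Iso H.NC) :
    ∃ φ : (K2.tensor G).Iso (K2.tensor H),
      ∀ p : Fin 2 × G.V, (φ.toEquiv p).1 = p.1 := by
    classical
  obtain ⟨e, he⟩ := h
  have he' := symm_iso G H e he
  choose f hf using push_exists G H hGlf hHlf hGst hG e he
  choose g hg using push_exists H G hHlf hGlf hHst hH e.symm he'
  have hgf : ∀ v, g (f v) = v := by
    intro v
    refine hGst (g (f v)) v ?_
    intro y hy
    have hy' : G.E (g (f v)) (⟨y, ⟨g (f v), G.symm hy⟩⟩ : G.NC.V).val := hy
    obtain ⟨b, hb, hb2⟩ := (hg (f v) _).1 hy'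
    obtain ⟨a, ha, ha2⟩ := (hf v b).1 hb
    have : a = (⟨y, ⟨g (f v), G.symm hy⟩⟩ : G.NC.V) := by
      rw [← hb2, ← ha2, e.symm_apply_apply]
    rw [this] at ha
    exact ha
  have hfg : ∀ w, f (g w) = w := by
    intro w
    refine hHst (f (g w)) w ?_
    intro y hy
    have hy' : H.E (f (g w)) (⟨y, ⟨f (g w), H.symm hy⟩⟩ : H.NC.V).val := hy
    obtain ⟨a, ha, ha2⟩ := (hf (g w) _).1 hy'
    obtain ⟨b, hb, hb2⟩ := (hg w a).1 ha
    have : b = (⟨y, ⟨f (g w), H.symm hy⟩⟩ : H.NC.V) := by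
      rw [← ha2, ← hb2, e.apply_symm_apply]
    rw [this] at hb
    exact hb
  set ef : G.V → H.V := fun x => (e ⟨x, hG x⟩).val with hef
  set eg : H.V → G.V := fun y => (e.symm ⟨y, hH y⟩).val with hegdef
  have hge : ∀ x, eg (ef x) = x := by
    intro x
    show (e.symm ⟨(e ⟨x, hG x⟩).val, hH _⟩).val = x
    have h1 : (⟨(e ⟨x, hG x⟩).val, hH _⟩ : H.NC.V) = e ⟨x, hG x⟩ := Subtype.ext rfl
    rw [h1]
    exact congrArg Subtype.val (e.symm_apply_apply _)
  have heg' : ∀ y, ef (eg y) = y := by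
    intro y
    show (e ⟨(e.symm ⟨y, hH y⟩).val, hG _⟩).val = y
    have h1 : (⟨(e.symm ⟨y, hH y⟩).val, hG _⟩ : G.NC.V) = e.symm ⟨y, hH y⟩ := Subtype.ext rfl
    rw [h1]
    exact congrArg Subtype.val (e.apply_symm_apply _)
  have key : ∀ v x : G.V, G.E v x ↔ H.E (f v) (ef x) := by
    intro v x
    rw [hf v (e ⟨x, hG x⟩)]
    constructor
    · intro hvx
      exact ⟨⟨x, hG x⟩, hvx, rfl⟩
    · rintro ⟨a, ha, ha2⟩
      have : a = ⟨x, hG x⟩ := e.injective ha2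
      rwa [this] at ha
  have key2 : ∀ v x : G.V, G.E v x ↔ H.E (ef v) (f x) := by
    intro v x
    constructor
    · intro hvx
      exact H.symm ((key x v).1 (G.symm hvx))
    · intro hvx
      exact G.symm ((key x v).2 (H.symm hvx))
  let T : Fin 2 × G.V → Fin 2 × H.V := fun p => (p.1, if p.1 = 0 then ef p.2 else f p.2)
  let Ti : Fin 2 × H.V → Fin 2 × G.V := fun q => (q.1, if q.1 = 0 then eg q.2 else g q.2)
  have hTl : ∀ p, Ti (T p) = p := by
    rintro ⟨i, x⟩
    show (i, if i = 0 then eg (if i = 0 then ef x else f x) else g (if i = 0 then ef x else f x)) = (i, x)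
    by_cases hi : i = 0 <;> simp [hi, hge, hgf]
  have hTr : ∀ q, T (Ti q) = q := by
    rintro ⟨i, x⟩
    show (i, if i = 0 then ef (if i = 0 then eg x else g x) else f (if i = 0 then eg x else g x)) = (i, x)
    by_cases hi : i = 0 <;> simp [hi, heg', hfg]
  let E0 : (Fin 2 × G.V) ≃ (Fin 2 × H.V) := ⟨T, Ti, hTl, hTr⟩
  have key3 : ∀ i j : Fin 2, i ≠ j → ∀ (x y : G.V),
      (G.E x y ↔ H.E (if i = 0 then ef x else f x) (if j = 0 then ef y else f y)) := by
    intro i j hij x y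
    fin_cases i <;> fin_cases j
    · exact absurd rfl hij
    · exact key2 x y
    · exact key x y
    · exact absurd rfl hij
  refine ⟨{ toEquiv := E0, edge_iff := ?_ }, fun p => rfl⟩
  rintro ⟨i, x⟩ ⟨j, y⟩
  constructor
  · rintro ⟨hij, hxy⟩
    exact ⟨hij, (key3 i j hij x y).1 hxy⟩
  · rintro ⟨hij, hxy⟩
    exact ⟨hij, (key3 i j hij x y).2 hxy⟩
end
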